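/- arXiv:2211.08004 — 6 statements merged into one kernel-verified Lean document; each statement's English description precedes it below -/
import Mathlib

section
/- For every σ > 0, the sequence k ↦ Υ_k(σ) := s_{2k+2}/((2k+1)·s_{2k}) − σ is strictly decreasing in k. -/
open Real MeasureTheory intervalIntegral Set

private lemma ups_int (σ : ℝ) (m : ℕ) (a b : ℝ) :
    IntervalIntegrable (fun x : ℝ => Real.sin x ^ m * Real.exp (-(1 / σ) * Real.cos (2 * x)))
      volume a b := by
  apply Continuous.intervalIntegrable; fun_prop

private lemma ups_pos (σ : ℝ) (n : ℕ) :
    0 < ∫ x in (0:ℝ)..(2*π), Real.sin x ^ (2*n) * Real.exp (-(1 / σ) * Real.cos (2 * x)) := by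
  have hsplit : (∫ x in (0:ℝ)..π, Real.sin x ^ (2*n) * Real.exp (-(1 / σ) * Real.cos (2 * x)))
      + (∫ x in π..(2*π), Real.sin x ^ (2*n) * Real.exp (-(1 / σ) * Real.cos (2 * x)))
      = ∫ x in (0:ℝ)..(2*π), Real.sin x ^ (2*n) * Real.exp (-(1 / σ) * Real.cos (2 * x)) :=
    integral_add_adjacent_intervals (ups_int σ _ 0 π) (ups_int σ _ π (2*π))
  rw [← hsplit]
  have h1 : 0 < ∫ x in (0:ℝ)..π, Real.sin x ^ (2*n) * Real.exp (-(1 / σ) * Real.cos (2 * x)) := by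
    apply intervalIntegral_pos_of_pos_on (ups_int σ _ 0 π)
    · intro x hx
      have hsx : 0 < Real.sin x := Real.sin_pos_of_pos_of_lt_pi hx.1 hx.2
      exact mul_pos (pow_pos hsx _) (Real.exp_pos _)
    · exact pi_pos
  have h2 : 0 ≤ ∫ x in π..(2*π), Real.sin x ^ (2*n) * Real.exp (-(1 / σ) * Real.cos (2 * x)) := by
    apply intervalIntegral.integral_nonneg (by linarith [pi_pos])
    intro x _; exact mul_nonneg ((even_two_mul n).pow_nonneg _) (Real.exp_pos _).le
  linarith

private lemma ups_lt (σ : ℝ) (n : ℕ) :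
    (∫ x in (0:ℝ)..(2*π), Real.sin x ^ (2*n+2) * Real.exp (-(1 / σ) * Real.cos (2 * x)))
      < ∫ x in (0:ℝ)..(2*π), Real.sin x ^ (2*n) * Real.exp (-(1 / σ) * Real.cos (2 * x)) := by
  have hint : IntervalIntegrable
      (fun x : ℝ => Real.sin x ^ (2*n) * Real.cos x ^ 2 * Real.exp (-(1 / σ) * Real.cos (2 * x)))
      volume 0 (2*π) := by
    apply Continuous.intervalIntegrable; fun_prop
  have hint' : IntervalIntegrable
      (fun x : ℝ => Real.sin x ^ (2*n) * Real.cos x ^ 2 * Real.exp (-(1 / σ) * Real.cos (2 * x)))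
      volume 0 (π/2) := by
    apply Continuous.intervalIntegrable; fun_prop
  have hint'' : IntervalIntegrable
      (fun x : ℝ => Real.sin x ^ (2*n) * Real.cos x ^ 2 * Real.exp (-(1 / σ) * Real.cos (2 * x)))
      volume (π/2) (2*π) := by
    apply Continuous.intervalIntegrable; fun_prop
  have key : (∫ x in (0:ℝ)..(2*π), Real.sin x ^ (2*n) * Real.exp (-(1 / σ) * Real.cos (2 * x)))
      - (∫ x in (0:ℝ)..(2*π), Real.sin x ^ (2*n+2) * Real.exp (-(1 / σ) * Real.cos (2 * x)))
      = ∫ x in (0:ℝ)..(2*π),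
          Real.sin x ^ (2*n) * Real.cos x ^ 2 * Real.exp (-(1 / σ) * Real.cos (2 * x)) := by
    rw [← integral_sub (ups_int σ (2*n) 0 (2*π)) (ups_int σ (2*n+2) 0 (2*π))]
    apply integral_congr
    intro x _
    simp only
    linear_combination (-(Real.sin x ^ (2*n) * Real.exp (-(1 / σ) * Real.cos (2 * x)))) *
      (Real.sin_sq_add_cos_sq x)
  have hsplit : (∫ x in (0:ℝ)..(π/2),
        Real.sin x ^ (2*n) * Real.cos x ^ 2 * Real.exp (-(1 / σ) * Real.cos (2 * x)))
      + (∫ x in (π/2)..(2*π),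
        Real.sin x ^ (2*n) * Real.cos x ^ 2 * Real.exp (-(1 / σ) * Real.cos (2 * x)))
      = ∫ x in (0:ℝ)..(2*π),
        Real.sin x ^ (2*n) * Real.cos x ^ 2 * Real.exp (-(1 / σ) * Real.cos (2 * x)) :=
    integral_add_adjacent_intervals hint' hint''
  have h1 : 0 < ∫ x in (0:ℝ)..(π/2),
      Real.sin x ^ (2*n) * Real.cos x ^ 2 * Real.exp (-(1 / σ) * Real.cos (2 * x)) := by
    apply intervalIntegral_pos_of_pos_on hint'
    · intro x hx
      have hsx : 0 < Real.sin x :=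
        Real.sin_pos_of_pos_of_lt_pi hx.1 (lt_trans hx.2 (by linarith [pi_pos]))
      have hx1 := hx.1
      have hx2 := hx.2
      have hcx : 0 < Real.cos x := Real.cos_pos_of_mem_Ioo ⟨by linarith [pi_pos], hx2⟩
      exact mul_pos (mul_pos (pow_pos hsx _) (pow_pos hcx _)) (Real.exp_pos _)
    · linarith [pi_pos]
  have h2 : 0 ≤ ∫ x in (π/2)..(2*π),
      Real.sin x ^ (2*n) * Real.cos x ^ 2 * Real.exp (-(1 / σ) * Real.cos (2 * x)) := by
    apply intervalIntegral.integral_nonneg (by linarith [pi_pos])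
    intro x _
    exact mul_nonneg (mul_nonneg ((even_two_mul n).pow_nonneg _) (sq_nonneg _)) (Real.exp_pos _).le
  linarith

private lemma ups_deriv (σ : ℝ) (hσ : 0 < σ) (n : ℕ) (x : ℝ) :
    HasDerivAt (fun x : ℝ => Real.sin x ^ (2*n+1) * Real.cos x * Real.exp (-(1 / σ) * Real.cos (2 * x)))
      (((2*n:ℝ)+1) * (Real.sin x ^ (2*n) * Real.exp (-(1 / σ) * Real.cos (2 * x)))
        - ((2*n:ℝ)+2) * (Real.sin x ^ (2*n+2) * Real.exp (-(1 / σ) * Real.cos (2 * x)))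
        + (4/σ) * (Real.sin x ^ (2*n+2) * Real.exp (-(1 / σ) * Real.cos (2 * x))
            - Real.sin x ^ (2*n+4) * Real.exp (-(1 / σ) * Real.cos (2 * x)))) x := by
  have h2x : HasDerivAt (fun x : ℝ => 2 * x) 2 x := by
    simpa using (hasDerivAt_id x).const_mul 2
  have hcos2 : HasDerivAt (fun x : ℝ => Real.cos (2 * x)) (-Real.sin (2*x) * 2) x :=
    (Real.hasDerivAt_cos (2*x)).comp x h2x
  have hinner : HasDerivAt (fun x : ℝ => -(1/σ) * Real.cos (2 * x)) (-(1/σ) * (-Real.sin (2*x) * 2)) x :=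
    hcos2.const_mul _
  have hexp : HasDerivAt (fun x : ℝ => Real.exp (-(1 / σ) * Real.cos (2 * x)))
      (Real.exp (-(1 / σ) * Real.cos (2 * x)) * (-(1/σ) * (-Real.sin (2*x) * 2))) x := hinner.exp
  have hpow : HasDerivAt (fun x : ℝ => Real.sin x ^ (2*n+1))
      ((2*n+1 : ℕ) * Real.sin x ^ (2*n) * Real.cos x) x := by
    simpa using (Real.hasDerivAt_sin x).fun_pow (2*n+1)
  have hF := ((hpow.fun_mul (Real.hasDerivAt_cos x)).fun_mul hexp)
  refine hF.congr_deriv ?_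
  symm
  have hsc := Real.sin_sq_add_cos_sq x
  have h2 := Real.sin_two_mul x
  push_cast
  linear_combination (-Real.exp (-(1 / σ) * Real.cos (2 * x)) * (((2*n:ℝ)+1) * Real.sin x ^(2*n) + 4/σ * Real.sin x^(2*n+2))) * hsc - (2/σ * Real.exp (-(1 / σ) * Real.cos (2 * x)) * Real.sin x^(2*n+1) * Real.cos x) * h2

private lemma ups_rec (σ : ℝ) (hσ : 0 < σ) (n : ℕ) :
    ((2*n:ℝ)+1) * (∫ x in (0:ℝ)..(2*π), Real.sin x ^ (2*n) * Real.exp (-(1 / σ) * Real.cos (2 * x)))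
      - ((2*n:ℝ)+2) * (∫ x in (0:ℝ)..(2*π), Real.sin x ^ (2*n+2) * Real.exp (-(1 / σ) * Real.cos (2 * x)))
      + (4/σ) * ((∫ x in (0:ℝ)..(2*π), Real.sin x ^ (2*n+2) * Real.exp (-(1 / σ) * Real.cos (2 * x)))
          - (∫ x in (0:ℝ)..(2*π), Real.sin x ^ (2*n+4) * Real.exp (-(1 / σ) * Real.cos (2 * x)))) = 0 := by
  have hint : IntervalIntegrable (fun x : ℝ =>
      ((2*n:ℝ)+1) * (Real.sin x ^ (2*n) * Real.exp (-(1 / σ) * Real.cos (2 * x)))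
        - ((2*n:ℝ)+2) * (Real.sin x ^ (2*n+2) * Real.exp (-(1 / σ) * Real.cos (2 * x)))
        + (4/σ) * (Real.sin x ^ (2*n+2) * Real.exp (-(1 / σ) * Real.cos (2 * x))
            - Real.sin x ^ (2*n+4) * Real.exp (-(1 / σ) * Real.cos (2 * x)))) volume 0 (2*π) := by
    apply Continuous.intervalIntegrable; fun_prop
  have h0 : (∫ x in (0:ℝ)..(2*π),
      (((2*n:ℝ)+1) * (Real.sin x ^ (2*n) * Real.exp (-(1 / σ) * Real.cos (2 * x)))
        - ((2*n:ℝ)+2) * (Real.sin x ^ (2*n+2) * Real.exp (-(1 / σ) * Real.cos (2 * x)))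
        + (4/σ) * (Real.sin x ^ (2*n+2) * Real.exp (-(1 / σ) * Real.cos (2 * x))
            - Real.sin x ^ (2*n+4) * Real.exp (-(1 / σ) * Real.cos (2 * x)))))
      = (Real.sin (2*π) ^ (2*n+1) * Real.cos (2*π) * Real.exp (-(1 / σ) * Real.cos (2 * (2*π))))
        - (Real.sin 0 ^ (2*n+1) * Real.cos 0 * Real.exp (-(1 / σ) * Real.cos (2 * 0))) :=
    integral_eq_sub_of_hasDerivAt (fun x _ => ups_deriv σ hσ n x) hint
  rw [Real.sin_two_pi, Real.sin_zero, zero_pow (by omega)] at h0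
  simp only [zero_mul] at h0
  rw [integral_add (((ups_int σ (2*n) 0 (2*π)).const_mul _).sub ((ups_int σ (2*n+2) 0 (2*π)).const_mul _))
        (((ups_int σ (2*n+2) 0 (2*π)).sub (ups_int σ (2*n+4) 0 (2*π))).const_mul _),
      integral_sub ((ups_int σ (2*n) 0 (2*π)).const_mul _) ((ups_int σ (2*n+2) 0 (2*π)).const_mul _),
      intervalIntegral.integral_const_mul, intervalIntegral.integral_const_mul, intervalIntegral.integral_const_mul,
      integral_sub (ups_int σ (2*n+2) 0 (2*π)) (ups_int σ (2*n+4) 0 (2*π))] at h0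
  linarith

/-- For every σ > 0, the sequence k ↦ Υ_k(σ) := s_{2k+2}/((2k+1)s_{2k}) − σ is strictly
decreasing in k. -/
theorem upsilon_strict_anti (σ : ℝ) (hσ : 0 < σ)
    (s : ℕ → ℝ)
    (hs : ∀ k : ℕ, s k =
      ∫ x in (0:ℝ)..(2 * π), (Real.sin x) ^ k * Real.exp (-(1 / σ) * Real.cos (2 * x))) :
    StrictAnti (fun k : ℕ => s (2 * k + 2) / ((2 * (k : ℝ) + 1) * s (2 * k)) - σ) := by
  apply strictAnti_nat_of_succ_lt
  intro k
  simp only [Nat.cast_add, Nat.cast_one]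
  rw [show (2*((k:ℝ)+1)+1) = 2*(k:ℝ)+3 from by ring]
  show s (2*k+4) / ((2*(k:ℝ)+3) * s (2*k+2)) - σ < s (2*k+2) / ((2*(k:ℝ)+1) * s (2*k)) - σ
  set A := s (2 * k) with hA_def
  set B := s (2 * k + 2) with hB_def
  set C := s (2 * k + 4) with hC_def
  have hA : 0 < A := by rw [hA_def, hs]; exact ups_pos σ k
  have hB : 0 < B := by
    rw [hB_def, hs]
    have := ups_pos σ (k+1); rwa [show 2*(k+1) = 2*k+2 from by ring] at this
  have hC : 0 < C := by
    rw [hC_def, hs]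
    have := ups_pos σ (k+2); rwa [show 2*(k+2) = 2*k+4 from by ring] at this
  have hCB : C < B := by
    rw [hB_def, hC_def, hs, hs]
    have := ups_lt σ (k+1)
    rwa [show 2*(k+1) = 2*k+2 from by ring, show 2*k+2+2 = 2*k+4 from by ring] at this
  have hrec : ((2*k:ℝ)+1) * A - ((2*k:ℝ)+2) * B + (4/σ) * (B - C) = 0 := by
    rw [hA_def, hB_def, hC_def, hs, hs, hs]
    have := ups_rec σ hσ k
    rwa [show 2*k+2+2 = 2*k+4 from by ring] at this
  have hσ' : σ ≠ 0 := ne_of_gt hσ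
  have hlt : ((2*k:ℝ)+1) * A < ((2*k:ℝ)+2) * B := by
    have h4 : 0 < (4/σ) * (B - C) := mul_pos (by positivity) (by linarith)
    linarith
  have hgoal : C / ((2*(k:ℝ)+3) * B) < B / ((2*(k:ℝ)+1) * A) := by
    rw [div_lt_div_iff₀ (by positivity) (by positivity)]
    have hCeq : C = B - (σ/4) * (((2*k:ℝ)+2) * B - ((2*k:ℝ)+1) * A) := by
      field_simp at hrec ⊢
      linarith
    have hpos1 : 0 < (σ/4) * (((2*k:ℝ)+1) * A) * ((((2*k:ℝ)+2) * B) - (((2*k:ℝ)+1) * A)) := by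
      apply mul_pos (mul_pos (by positivity) (by positivity))
      linarith
    have h1 : ((2*k:ℝ)+1) * A * B < ((2*k:ℝ)+2) * B * B :=
      mul_lt_mul_of_pos_right hlt hB
    nlinarith [mul_pos hB hB]
  linarith
end

section
/- For all σ > 0, all M > 0 and all φ ∈ (0, π/2), the integral I(M,φ) := ∫_{0}^{2π} sin(x−φ) · exp(−(1/σ)(cos(2x) − M·cos(x−φ))) dx is strictly positive. -/
open Real MeasureTheory intervalIntegral

/-- For all σ > 0, M > 0, φ ∈ (0, π/2), the integral
I(M,φ) := ∫₀^{2π} sin(x−φ) e^{−(1/σ)cos(2x)} e^{(M/σ)cos(x−φ)} dx is strictly positive. -/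
theorem first_quadrant_integral_pos (σ M φ : ℝ) (hσ : 0 < σ) (hM : 0 < M)
    (hφ : φ ∈ Set.Ioo 0 (π / 2)) :
    0 < ∫ x in (0:ℝ)..(2 * π),
      Real.sin (x - φ) * Real.exp (-(1 / σ) * Real.cos (2 * x))
        * Real.exp ((M / σ) * Real.cos (x - φ)) := by
  obtain ⟨hφ0, hφ2⟩ := hφ
  set G : ℝ → ℝ := fun y =>
    Real.sin y * Real.exp (-(1 / σ) * Real.cos (2 * y + 2 * φ))
      * Real.exp ((M / σ) * Real.cos y) with hG
  have hGcont : Continuous G := by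
    refine (Real.continuous_sin.mul (Real.continuous_exp.comp ?_)).mul
      (Real.continuous_exp.comp (continuous_const.mul Real.continuous_cos))
    exact continuous_const.mul (Real.continuous_cos.comp
      ((continuous_const.mul continuous_id).add continuous_const))
  have hGper : Function.Periodic G (2 * π) := by
    intro y
    simp only [hG]
    rw [Real.sin_add_two_pi, show 2 * (y + 2 * π) + 2 * φ = (2 * y + 2 * φ + 2*π) + 2*π by ring,
      Real.cos_add_two_pi, Real.cos_add_two_pi, Real.cos_add_two_pi]
  -- Step 1: original integral equals ∫_0^{2π} G
  have step1 : (∫ x in (0:ℝ)..(2 * π),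
      Real.sin (x - φ) * Real.exp (-(1 / σ) * Real.cos (2 * x))
        * Real.exp ((M / σ) * Real.cos (x - φ))) = ∫ y in (0:ℝ)..(2 * π), G y := by
    have e1 : (∫ x in (0:ℝ)..(2 * π),
        Real.sin (x - φ) * Real.exp (-(1 / σ) * Real.cos (2 * x))
          * Real.exp ((M / σ) * Real.cos (x - φ))) = ∫ x in (0:ℝ)..(2*π), G (x - φ) := by
      apply intervalIntegral.integral_congr
      intro x _
      simp only [hG]
      rw [show 2 * (x - φ) + 2 * φ = 2 * x by ring]
    rw [e1, intervalIntegral.integral_comp_sub_right G φ]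
    have := hGper.intervalIntegral_add_eq (-φ) 0
    rw [show (0:ℝ) - φ = -φ by ring, show 2*π - φ = -φ + 2*π by ring, this, zero_add]
  rw [step1]
  -- Step 2: split into four pieces over [0, π/2]
  have hint : ∀ a b : ℝ, IntervalIntegrable G volume a b :=
    fun a b => hGcont.intervalIntegrable a b
  have split : (∫ y in (0:ℝ)..(2 * π), G y) =
      ∫ s in (0:ℝ)..(π/2), (G s + G (π - s) + G (π + s) + G (2*π - s)) := by
    have h1 : (∫ y in (0:ℝ)..(2*π), G y) =
        (∫ y in (0:ℝ)..(π/2), G y) + (∫ y in (π/2:ℝ)..π, G y)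
          + (∫ y in (π:ℝ)..(3*π/2), G y) + (∫ y in (3*π/2:ℝ)..(2*π), G y) := by
      have a1 := intervalIntegral.integral_add_adjacent_intervals (hint 0 (π/2)) (hint (π/2) π)
      have a2 := intervalIntegral.integral_add_adjacent_intervals (hint 0 π) (hint π (3*π/2))
      have a3 := intervalIntegral.integral_add_adjacent_intervals (hint 0 (3*π/2)) (hint (3*π/2) (2*π))
      linarith
    have h2 : (∫ y in (π/2:ℝ)..π, G y) = ∫ s in (0:ℝ)..(π/2), G (π - s) := by
      rw [intervalIntegral.integral_comp_sub_left G π, show π - π/2 = π/2 by ring, sub_zero]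
    have h3 : (∫ y in (π:ℝ)..(3*π/2), G y) = ∫ s in (0:ℝ)..(π/2), G (π + s) := by
      rw [intervalIntegral.integral_comp_add_left G π, add_zero, show π + π/2 = 3*π/2 by ring]
    have h4 : (∫ y in (3*π/2:ℝ)..(2*π), G y) = ∫ s in (0:ℝ)..(π/2), G (2*π - s) := by
      rw [intervalIntegral.integral_comp_sub_left G (2*π), show 2*π - π/2 = 3*π/2 by ring, sub_zero]
    rw [h1, h2, h3, h4]
    have c1 : Continuous (fun s : ℝ => G (π - s)) :=
      hGcont.comp (continuous_const.sub continuous_id)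
    have c2 : Continuous (fun s : ℝ => G (π + s)) :=
      hGcont.comp (continuous_const.add continuous_id)
    have c3 : Continuous (fun s : ℝ => G (2*π - s)) :=
      hGcont.comp (continuous_const.sub continuous_id)
    rw [← intervalIntegral.integral_add (hGcont.intervalIntegrable _ _)
        (c1.intervalIntegrable _ _),
      ← intervalIntegral.integral_add (f := fun x => G x + G (π - x)) ((hGcont.add c1).intervalIntegrable _ _)
        (c2.intervalIntegrable _ _),
      ← intervalIntegral.integral_add (f := fun x => G x + G (π - x) + G (π + x)) (((hGcont.add c1).add c2).intervalIntegrable _ _)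
        (c3.intervalIntegrable _ _)]
  rw [split]
  -- Step 3: positivity
  apply intervalIntegral.intervalIntegral_pos_of_pos_on
  · exact (((hGcont.add (hGcont.comp (continuous_const.sub continuous_id))).add
      (hGcont.comp (continuous_const.add continuous_id))).add
      (hGcont.comp (continuous_const.sub continuous_id))).intervalIntegrable _ _
  · intro s hs
    obtain ⟨hs0, hs2⟩ := hs
    simp only [hG]
    -- rewrite trig values
    rw [Real.sin_pi_sub, Real.cos_pi_sub,
      show π + s = s + π by ring, Real.sin_add_pi, Real.cos_add_pi,
      show (2*π - s) = -s + 2*π by ring, Real.sin_add_two_pi, Real.cos_add_two_pi,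
      Real.sin_neg, Real.cos_neg,
      show 2 * (π - s) + 2 * φ = (2*π) - (2*s - 2*φ) by ring, Real.cos_two_pi_sub,
      show 2 * (s + π) + 2 * φ = (2*s + 2*φ) + 2*π by ring, Real.cos_add_two_pi,
      show 2 * (-s + 2*π) + 2 * φ = ((2*π) - (2*s - 2*φ)) + 2*π by ring,
      Real.cos_add_two_pi, Real.cos_two_pi_sub]
    have hsin : 0 < Real.sin s := Real.sin_pos_of_pos_of_lt_pi hs0 (by linarith [Real.pi_pos])
    have hcos : 0 < Real.cos s := Real.cos_pos_of_mem_Ioo ⟨by linarith [Real.pi_pos], hs2⟩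
    have hAB : Real.cos (2*s + 2*φ) < Real.cos (2*s - 2*φ) := by
      have := Real.cos_sub_cos (2*s + 2*φ) (2*s - 2*φ)
      have h1 : Real.sin ((2*s + 2*φ + (2*s - 2*φ)) / 2) = Real.sin (2*s) := by ring_nf
      have h2 : Real.sin ((2*s + 2*φ - (2*s - 2*φ)) / 2) = Real.sin (2*φ) := by ring_nf
      rw [h1, h2] at this
      have hs2s : 0 < Real.sin (2*s) :=
        Real.sin_pos_of_pos_of_lt_pi (by linarith) (by linarith)
      have hs2φ : 0 < Real.sin (2*φ) :=
        Real.sin_pos_of_pos_of_lt_pi (by linarith) (by linarith)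
      nlinarith
    have hEab : Real.exp (-(1 / σ) * Real.cos (2*s - 2*φ))
        < Real.exp (-(1 / σ) * Real.cos (2*s + 2*φ)) := by
      apply Real.exp_lt_exp.mpr
      have h1σ : 0 < 1 / σ := by positivity
      nlinarith
    have hEcd : Real.exp ((M / σ) * -Real.cos s) < Real.exp ((M / σ) * Real.cos s) := by
      apply Real.exp_lt_exp.mpr
      have : 0 < M / σ := by positivity
      nlinarith
    set a := Real.exp (-(1 / σ) * Real.cos (2*s + 2*φ))
    set b := Real.exp (-(1 / σ) * Real.cos (2*s - 2*φ))
    set c := Real.exp ((M / σ) * Real.cos s)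
    set d := Real.exp ((M / σ) * -Real.cos s)
    have key : Real.sin s * a * c + Real.sin s * b * d + -Real.sin s * a * d
        + -Real.sin s * b * c = Real.sin s * (a - b) * (c - d) := by ring
    rw [key]
    apply mul_pos (mul_pos hsin (by linarith)) (by linarith)
  · positivity
end

section
/- If (m₁, m₂) ∈ ℝ² is a fixed point of the map g_σ and (m₁, m₂) ≠ (0,0), then m₁ = 0 or m₂ = 0. -/
open Real MeasureTheory intervalIntegral

private lemma exp_sinh_sign (t : ℝ) (ht : t ≠ 0) :
    0 < (Real.exp t - Real.exp (-t)) * t := by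
  rcases ht.lt_or_gt with h | h
  · have h2 : Real.exp t < Real.exp (-t) := Real.exp_lt_exp.mpr (by linarith)
    nlinarith
  · have h2 : Real.exp (-t) < Real.exp t := Real.exp_lt_exp.mpr (by linarith)
    nlinarith

private lemma ftc_identity (σ a b : ℝ) (hσ : 0 < σ) :
    2 * (∫ x in (0:ℝ)..(2 * π), Real.sin (2 * x) *
          Real.exp (-(1 / σ) * (Real.cos (2 * x) - a * Real.cos x - b * Real.sin x)))
      - a * (∫ x in (0:ℝ)..(2 * π), Real.sin x *
          Real.exp (-(1 / σ) * (Real.cos (2 * x) - a * Real.cos x - b * Real.sin x)))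
      + b * (∫ x in (0:ℝ)..(2 * π), Real.cos x *
          Real.exp (-(1 / σ) * (Real.cos (2 * x) - a * Real.cos x - b * Real.sin x))) = 0 := by
  set F : ℝ → ℝ := fun x =>
    Real.exp (-(1 / σ) * (Real.cos (2 * x) - a * Real.cos x - b * Real.sin x)) with hF
  have hFc : Continuous F := by rw [hF]; fun_prop
  have hF' : ∀ x : ℝ, HasDerivAt F
      ((1 / σ) * ((2 * Real.sin (2 * x) - a * Real.sin x + b * Real.cos x) * F x)) x := by
    intro x
    have h2x : HasDerivAt (fun y : ℝ => 2 * y) 2 x := by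
      simpa using (hasDerivAt_id x).const_mul 2
    have hc2 : HasDerivAt (fun y : ℝ => Real.cos (2 * y)) (-Real.sin (2 * x) * 2) x := h2x.cos
    have hac : HasDerivAt (fun y : ℝ => a * Real.cos y) (a * (-Real.sin x)) x :=
      (Real.hasDerivAt_cos x).const_mul a
    have hbs : HasDerivAt (fun y : ℝ => b * Real.sin y) (b * Real.cos x) x :=
      (Real.hasDerivAt_sin x).const_mul b
    have hinner : HasDerivAt
        (fun y : ℝ => -(1 / σ) * (Real.cos (2 * y) - a * Real.cos y - b * Real.sin y))
        (-(1 / σ) * ((-Real.sin (2 * x) * 2) - a * (-Real.sin x) - b * Real.cos x)) x :=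
      ((hc2.sub hac).sub hbs).const_mul (-(1 / σ))
    have := hinner.exp
    rw [hF]
    convert this using 1
    ring
  have hGc : Continuous fun x : ℝ =>
      (1 / σ) * ((2 * Real.sin (2 * x) - a * Real.sin x + b * Real.cos x) * F x) := by
    rw [hF]; fun_prop
  have hI := intervalIntegral.integral_eq_sub_of_hasDerivAt
    (f := F) (a := (0:ℝ)) (b := 2 * π) (fun x _ => hF' x)
    (hGc.intervalIntegrable _ _)
  have hper : F (2 * π) = F 0 := by
    rw [hF]
    have h4 : (2:ℝ) * (2 * π) = 2 * π + 2 * π := by ring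
    simp [h4, Real.cos_add, Real.sin_add, Real.sin_two_pi, Real.cos_two_pi]
  rw [hper, sub_self, intervalIntegral.integral_const_mul] at hI
  have hIz : (∫ x in (0:ℝ)..(2 * π),
      (2 * Real.sin (2 * x) - a * Real.sin x + b * Real.cos x) * F x) = 0 := by
    rcases mul_eq_zero.mp hI with h | h
    · exact absurd h (by positivity)
    · exact h
  have i1 : IntervalIntegrable (fun x => Real.sin (2 * x) * F x) volume 0 (2 * π) :=
    (by rw [hF]; fun_prop : Continuous fun x => Real.sin (2 * x) * F x).intervalIntegrable _ _
  have i2 : IntervalIntegrable (fun x => Real.sin x * F x) volume 0 (2 * π) :=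
    (by rw [hF]; fun_prop : Continuous fun x => Real.sin x * F x).intervalIntegrable _ _
  have i3 : IntervalIntegrable (fun x => Real.cos x * F x) volume 0 (2 * π) :=
    (by rw [hF]; fun_prop : Continuous fun x => Real.cos x * F x).intervalIntegrable _ _
  calc 2 * (∫ x in (0:ℝ)..(2 * π), Real.sin (2 * x) * F x)
        - a * (∫ x in (0:ℝ)..(2 * π), Real.sin x * F x)
        + b * (∫ x in (0:ℝ)..(2 * π), Real.cos x * F x)
      = ∫ x in (0:ℝ)..(2 * π),
          (2 * (Real.sin (2 * x) * F x) - a * (Real.sin x * F x) + b * (Real.cos x * F x)) := by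
        rw [intervalIntegral.integral_add ((i1.const_mul 2).sub (i2.const_mul a)) (i3.const_mul b),
          intervalIntegral.integral_sub (i1.const_mul 2) (i2.const_mul a),
          intervalIntegral.integral_const_mul, intervalIntegral.integral_const_mul,
          intervalIntegral.integral_const_mul]
    _ = ∫ x in (0:ℝ)..(2 * π),
          (2 * Real.sin (2 * x) - a * Real.sin x + b * Real.cos x) * F x :=
        intervalIntegral.integral_congr (fun x _ => by ring)
    _ = 0 := hIz

private lemma key_integral_ne (σ a b : ℝ) (hσ : 0 < σ) (ha : a ≠ 0) (hb : b ≠ 0) :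
    (∫ x in (0:ℝ)..(2 * π), Real.sin (2 * x) *
        Real.exp (-(1 / σ) * (Real.cos (2 * x) - a * Real.cos x - b * Real.sin x))) ≠ 0 := by
  set h : ℝ → ℝ := fun x => Real.sin (2 * x) *
    Real.exp (-(1 / σ) * (Real.cos (2 * x) - a * Real.cos x - b * Real.sin x)) with hh
  have hhc : Continuous h := by rw [hh]; fun_prop
  set G : ℝ → ℝ := fun x => Real.sin (2 * x) * Real.exp (-(Real.cos (2 * x) / σ)) *
    (Real.exp (a * Real.cos x / σ) - Real.exp (-(a * Real.cos x / σ))) *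
    (Real.exp (b * Real.sin x / σ) - Real.exp (-(b * Real.sin x / σ))) with hG
  have hGc : Continuous G := by rw [hG]; fun_prop
  -- pointwise identity
  have hpt : ∀ x : ℝ, h x + h (π - x) + h (π + x) + h (2 * π - x) = G x := by
    intro x
    have t1 : Real.cos (2 * (π - x)) = Real.cos (2 * x) := by
      rw [show 2 * (π - x) = 2 * π - 2 * x by ring, Real.cos_sub, Real.sin_two_pi,
        Real.cos_two_pi]; ring
    have t2 : Real.sin (2 * (π - x)) = -Real.sin (2 * x) := by
      rw [show 2 * (π - x) = 2 * π - 2 * x by ring, Real.sin_sub, Real.sin_two_pi,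
        Real.cos_two_pi]; ring
    have t3 : Real.cos (2 * (π + x)) = Real.cos (2 * x) := by
      rw [show 2 * (π + x) = 2 * π + 2 * x by ring, Real.cos_add, Real.sin_two_pi,
        Real.cos_two_pi]; ring
    have t4 : Real.sin (2 * (π + x)) = Real.sin (2 * x) := by
      rw [show 2 * (π + x) = 2 * π + 2 * x by ring, Real.sin_add, Real.sin_two_pi,
        Real.cos_two_pi]; ring
    have t5 : Real.cos (π - x) = -Real.cos x := Real.cos_pi_sub x
    have t6 : Real.sin (π - x) = Real.sin x := Real.sin_pi_sub x
    have t7 : Real.cos (π + x) = -Real.cos x := by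
      rw [Real.cos_add, Real.cos_pi, Real.sin_pi]; ring
    have t8 : Real.sin (π + x) = -Real.sin x := by
      rw [Real.sin_add, Real.cos_pi, Real.sin_pi]; ring
    have t9 : Real.cos (2 * (2 * π - x)) = Real.cos (2 * x) := by
      rw [show 2 * (2 * π - x) = (2 * π - 2 * x) + 2 * π by ring, Real.cos_add_two_pi,
        Real.cos_sub, Real.sin_two_pi, Real.cos_two_pi]; ring
    have t10 : Real.sin (2 * (2 * π - x)) = -Real.sin (2 * x) := by
      rw [show 2 * (2 * π - x) = (2 * π - 2 * x) + 2 * π by ring, Real.sin_add_two_pi,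
        Real.sin_sub, Real.sin_two_pi, Real.cos_two_pi]; ring
    have t11 : Real.cos (2 * π - x) = Real.cos x := by
      rw [Real.cos_sub, Real.sin_two_pi, Real.cos_two_pi]; ring
    have t12 : Real.sin (2 * π - x) = -Real.sin x := by
      rw [Real.sin_sub, Real.sin_two_pi, Real.cos_two_pi]; ring
    have key : ∀ u v : ℝ, Real.exp (-(1 / σ) * (Real.cos (2 * x) - u - v))
        = Real.exp (-(Real.cos (2 * x) / σ)) * Real.exp (u / σ) * Real.exp (v / σ) := by
      intro u v
      rw [← Real.exp_add, ← Real.exp_add]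
      congr 1
      ring
    rw [hh, hG]
    simp only [t1, t2, t3, t4, t5, t6, t7, t8, t9, t10, t11, t12, key]
    rw [show -(a * Real.cos x / σ) = (-(a * Real.cos x)) / σ by ring,
      show -(b * Real.sin x / σ) = (-(b * Real.sin x)) / σ by ring]
    ring_nf
  -- splitting of the integral
  have iH : ∀ c d : ℝ, IntervalIntegrable h volume c d := fun c d => hhc.intervalIntegrable _ _
  have m1 : (∫ x in (0:ℝ)..(π / 2), h (π - x)) = ∫ x in (π / 2)..π, h x := by
    have := intervalIntegral.integral_comp_sub_left (a := (0:ℝ)) (b := π / 2) h π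
    rw [this, show π - π / 2 = π / 2 by ring, sub_zero]
  have m2 : (∫ x in (0:ℝ)..(π / 2), h (π + x)) = ∫ x in π..(3 * π / 2), h x := by
    have := intervalIntegral.integral_comp_add_left (a := (0:ℝ)) (b := π / 2) h π
    rw [this, show π + π / 2 = 3 * π / 2 by ring, add_zero]
  have m3 : (∫ x in (0:ℝ)..(π / 2), h (2 * π - x)) = ∫ x in (3 * π / 2)..(2 * π), h x := by
    have := intervalIntegral.integral_comp_sub_left (a := (0:ℝ)) (b := π / 2) h (2 * π)
    rw [this, show 2 * π - π / 2 = 3 * π / 2 by ring, sub_zero]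
  have hSJ : (∫ x in (0:ℝ)..(π / 2), (h x + h (π - x) + h (π + x) + h (2 * π - x)))
      = ∫ x in (0:ℝ)..(2 * π), h x := by
    have j1 : IntervalIntegrable (fun x => h (π - x)) volume 0 (π / 2) :=
      ((hhc.comp (by fun_prop : Continuous fun x : ℝ => π - x))).intervalIntegrable _ _
    have j2 : IntervalIntegrable (fun x => h (π + x)) volume 0 (π / 2) :=
      ((hhc.comp (by fun_prop : Continuous fun x : ℝ => π + x))).intervalIntegrable _ _
    have j3 : IntervalIntegrable (fun x => h (2 * π - x)) volume 0 (π / 2) :=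
      ((hhc.comp (by fun_prop : Continuous fun x : ℝ => 2 * π - x))).intervalIntegrable _ _
    rw [intervalIntegral.integral_add (((iH 0 (π / 2)).add j1).add j2) j3,
      intervalIntegral.integral_add ((iH 0 (π / 2)).add j1) j2,
      intervalIntegral.integral_add (iH 0 (π / 2)) j1, m1, m2, m3,
      intervalIntegral.integral_add_adjacent_intervals (iH 0 (π / 2)) (iH (π / 2) π),
      intervalIntegral.integral_add_adjacent_intervals (iH 0 π) (iH π (3 * π / 2)),
      intervalIntegral.integral_add_adjacent_intervals (iH 0 (3 * π / 2)) (iH (3 * π / 2) (2 * π))]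
  intro hJ0
  -- positivity of the symmetrized integrand against a*b
  have hpos : 0 < ∫ x in (0:ℝ)..(π / 2), (a * b) * G x := by
    refine intervalIntegral_pos_of_pos_on ((continuous_const.mul hGc).intervalIntegrable _ _) ?_
      (by positivity)
    intro x hx
    obtain ⟨hx0, hx1⟩ := hx
    have hc : 0 < Real.cos x := Real.cos_pos_of_mem_Ioo ⟨by linarith [Real.pi_pos], hx1⟩
    have hs : 0 < Real.sin x := Real.sin_pos_of_pos_of_lt_pi hx0 (by linarith [Real.pi_pos])
    have h2 : 0 < Real.sin (2 * x) :=
      Real.sin_pos_of_pos_of_lt_pi (by linarith) (by linarith)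
    have hcs : 0 < Real.cos x / σ := div_pos hc hσ
    have hss : 0 < Real.sin x / σ := div_pos hs hσ
    have hp : a * Real.cos x / σ ≠ 0 := div_ne_zero (mul_ne_zero ha hc.ne') hσ.ne'
    have hq : b * Real.sin x / σ ≠ 0 := div_ne_zero (mul_ne_zero hb hs.ne') hσ.ne'
    have e1 := exp_sinh_sign _ hp
    have e2 := exp_sinh_sign _ hq
    have posfac : ∀ {u v : ℝ}, 0 < u * v → 0 < v → 0 < u := by
      intro u v hu hv
      rcases mul_pos_iff.mp hu with ⟨h', _⟩ | ⟨_, h'⟩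
      · exact h'
      · linarith
    have P1 : 0 < (Real.exp (a * Real.cos x / σ) - Real.exp (-(a * Real.cos x / σ))) * a := by
      refine posfac ?_ hcs
      have : ((Real.exp (a * Real.cos x / σ) - Real.exp (-(a * Real.cos x / σ))) * a) *
          (Real.cos x / σ) = (Real.exp (a * Real.cos x / σ) - Real.exp (-(a * Real.cos x / σ))) *
          (a * Real.cos x / σ) := by ring
      rw [this]; exact e1
    have P2 : 0 < (Real.exp (b * Real.sin x / σ) - Real.exp (-(b * Real.sin x / σ))) * b := by
      refine posfac ?_ hss
      have : ((Real.exp (b * Real.sin x / σ) - Real.exp (-(b * Real.sin x / σ))) * b) *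
          (Real.sin x / σ) = (Real.exp (b * Real.sin x / σ) - Real.exp (-(b * Real.sin x / σ))) *
          (b * Real.sin x / σ) := by ring
      rw [this]; exact e2
    have hR : 0 < Real.exp (-(Real.cos (2 * x) / σ)) := Real.exp_pos _
    rw [hG]
    have : a * b * (Real.sin (2 * x) * Real.exp (-(Real.cos (2 * x) / σ)) *
        (Real.exp (a * Real.cos x / σ) - Real.exp (-(a * Real.cos x / σ))) *
        (Real.exp (b * Real.sin x / σ) - Real.exp (-(b * Real.sin x / σ))))
        = (Real.sin (2 * x) * Real.exp (-(Real.cos (2 * x) / σ))) *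
          (((Real.exp (a * Real.cos x / σ) - Real.exp (-(a * Real.cos x / σ))) * a) *
           ((Real.exp (b * Real.sin x / σ) - Real.exp (-(b * Real.sin x / σ))) * b)) := by ring
    rw [this]
    exact mul_pos (mul_pos h2 hR) (mul_pos P1 P2)
  rw [intervalIntegral.integral_const_mul] at hpos
  have hG0 : (∫ x in (0:ℝ)..(π / 2), G x) = 0 := by
    rw [← intervalIntegral.integral_congr (fun x _ => hpt x), hSJ]
    exact hJ0
  rw [hG0, mul_zero] at hpos
  exact lt_irrefl 0 hpos

/-- Any fixed point of g_σ other than (0,0) lies on one of the coordinate axes. -/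
theorem fixed_points_on_axes (σ : ℝ) (hσ : 0 < σ)
    (Z : ℝ × ℝ → ℝ)
    (hZ : ∀ m : ℝ × ℝ, Z m = ∫ x in (0:ℝ)..(2 * π),
      Real.exp (-(1 / σ) * (Real.cos (2 * x) - m.1 * Real.cos x - m.2 * Real.sin x)))
    (g : ℝ × ℝ → ℝ × ℝ)
    (hg : ∀ m : ℝ × ℝ, g m =
      ((Z m)⁻¹ * ∫ x in (0:ℝ)..(2 * π), Real.cos x *
          Real.exp (-(1 / σ) * (Real.cos (2 * x) - m.1 * Real.cos x - m.2 * Real.sin x)),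
       (Z m)⁻¹ * ∫ x in (0:ℝ)..(2 * π), Real.sin x *
          Real.exp (-(1 / σ) * (Real.cos (2 * x) - m.1 * Real.cos x - m.2 * Real.sin x))))
    (m : ℝ × ℝ) (hfix : g m = m) (hne : m ≠ (0, 0)) :
    m.1 = 0 ∨ m.2 = 0 := by
  by_contra hcon
  push_neg at hcon
  obtain ⟨ha, hb⟩ := hcon
  have hFc : Continuous fun x : ℝ =>
      Real.exp (-(1 / σ) * (Real.cos (2 * x) - m.1 * Real.cos x - m.2 * Real.sin x)) := by
    fun_prop
  have hZpos : 0 < Z m := by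
    rw [hZ m]
    exact intervalIntegral_pos_of_pos_on (hFc.intervalIntegrable _ _)
      (fun x _ => Real.exp_pos _) (by positivity)
  have hfe := hfix
  rw [hg m] at hfe
  have h1 : (Z m)⁻¹ * (∫ x in (0:ℝ)..(2 * π), Real.cos x *
      Real.exp (-(1 / σ) * (Real.cos (2 * x) - m.1 * Real.cos x - m.2 * Real.sin x))) = m.1 :=
    congrArg Prod.fst hfe
  have h2 : (Z m)⁻¹ * (∫ x in (0:ℝ)..(2 * π), Real.sin x *
      Real.exp (-(1 / σ) * (Real.cos (2 * x) - m.1 * Real.cos x - m.2 * Real.sin x))) = m.2 :=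
    congrArg Prod.snd hfe
  have e1 : (∫ x in (0:ℝ)..(2 * π), Real.cos x *
      Real.exp (-(1 / σ) * (Real.cos (2 * x) - m.1 * Real.cos x - m.2 * Real.sin x)))
      = Z m * m.1 := by
    have := congrArg (fun t => Z m * t) h1
    simpa [← mul_assoc, mul_inv_cancel₀ hZpos.ne'] using this
  have e2 : (∫ x in (0:ℝ)..(2 * π), Real.sin x *
      Real.exp (-(1 / σ) * (Real.cos (2 * x) - m.1 * Real.cos x - m.2 * Real.sin x)))
      = Z m * m.2 := by
    have := congrArg (fun t => Z m * t) h2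
    simpa [← mul_assoc, mul_inv_cancel₀ hZpos.ne'] using this
  have hftc := ftc_identity σ m.1 m.2 hσ
  rw [e1, e2] at hftc
  have hJ0 : (∫ x in (0:ℝ)..(2 * π), Real.sin (2 * x) *
      Real.exp (-(1 / σ) * (Real.cos (2 * x) - m.1 * Real.cos x - m.2 * Real.sin x))) = 0 := by
    nlinarith [hftc]
  exact key_integral_ne σ m.1 m.2 hσ ha hb hJ0
end

section
/- For every σ > 0, the function ζ_σ(m) := ∫_{0}^{2π} (sin x − m)·exp(−(1/σ)cos(2x) + (m/σ)·sin x) dx admits the series expansion ζ_σ(m) = Σ_{k≥0} (1/(2k)!) · (m/σ)^{2k+1} · s_{2k} · (s_{2k+2}/((2k+1)·s_{2k}) − σ), valid for all m ∈ ℝ. -/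
open Real MeasureTheory intervalIntegral

private lemma zeta_cont (σ : ℝ) (n : ℕ) :
    Continuous (fun x : ℝ => Real.sin x ^ n * Real.exp (-(1 / σ) * Real.cos (2 * x))) := by
  fun_prop

/-- Odd moments vanish. -/
private lemma s_odd_zero (σ : ℝ) (k : ℕ) :
    (∫ x in (0:ℝ)..(2 * π),
      Real.sin x ^ (2 * k + 1) * Real.exp (-(1 / σ) * Real.cos (2 * x))) = 0 := by
  set f : ℝ → ℝ := fun x => Real.sin x ^ (2 * k + 1) * Real.exp (-(1 / σ) * Real.cos (2 * x))
    with hf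
  have h := intervalIntegral.integral_comp_sub_left (a := 0) (b := 2 * π) f (2 * π)
  have h2 : (∫ x in (0:ℝ)..(2 * π), f (2 * π - x)) = ∫ x in (0:ℝ)..(2 * π), -f x := by
    apply intervalIntegral.integral_congr
    intro x _
    have hcos : Real.cos (2 * (2 * π - x)) = Real.cos (2 * x) := by
      have : 2 * (2 * π - x) = -((2 * x - 2 * π) - 2 * π) := by ring
      rw [this, Real.cos_neg, Real.cos_sub_two_pi, Real.cos_sub_two_pi]
    simp only [hf, Real.sin_two_pi_sub, hcos]
    rw [Odd.neg_pow ⟨k, by ring⟩]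
    ring
  rw [h2, intervalIntegral.integral_neg] at h
  simp only [sub_self, sub_zero] at h
  linarith

/-- Even moments are positive. -/
private lemma s_even_pos (σ : ℝ) (k : ℕ) :
    0 < ∫ x in (0:ℝ)..(2 * π),
      Real.sin x ^ (2 * k) * Real.exp (-(1 / σ) * Real.cos (2 * x)) := by
  set f : ℝ → ℝ := fun x => Real.sin x ^ (2 * k) * Real.exp (-(1 / σ) * Real.cos (2 * x))
    with hf
  have hc : Continuous f := zeta_cont σ (2 * k)
  have hsplit : (∫ x in (0:ℝ)..(π / 2), f x) + (∫ x in (π/2:ℝ)..(2 * π), f x)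
      = ∫ x in (0:ℝ)..(2 * π), f x :=
    intervalIntegral.integral_add_adjacent_intervals
      (hc.intervalIntegrable _ _) (hc.intervalIntegrable _ _)
  have h1 : 0 < ∫ x in (0:ℝ)..(π / 2), f x := by
    apply intervalIntegral.intervalIntegral_pos_of_pos_on (hc.intervalIntegrable _ _)
    · intro x hx
      have hsin : 0 < Real.sin x :=
        Real.sin_pos_of_pos_of_lt_pi hx.1 (lt_trans hx.2 (half_lt_self Real.pi_pos))
      simp only [hf]
      positivity
    · linarith [Real.pi_pos]
  have h2 : 0 ≤ ∫ x in (π/2:ℝ)..(2 * π), f x := by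
    apply intervalIntegral.integral_nonneg (by linarith [Real.pi_pos])
    intro x _
    simp only [hf]
    exact mul_nonneg ((even_two_mul k).pow_nonneg _) (Real.exp_pos _).le
  linarith

/-- Series expansion of ζ_σ:
ζ_σ(m) = Σ_{k≥0} (1/(2k)!) (m/σ)^{2k+1} s_{2k} (s_{2k+2}/((2k+1)s_{2k}) − σ). -/
theorem zeta_series_expansion (σ : ℝ) (hσ : 0 < σ)
    (s : ℕ → ℝ)
    (hs : ∀ k : ℕ, s k =
      ∫ x in (0:ℝ)..(2 * π), (Real.sin x) ^ k * Real.exp (-(1 / σ) * Real.cos (2 * x)))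
    (ζ : ℝ → ℝ)
    (hζ : ∀ m : ℝ, ζ m = ∫ x in (0:ℝ)..(2 * π),
      (Real.sin x - m) * Real.exp (-(1 / σ) * Real.cos (2 * x) + (m / σ) * Real.sin x))
    (m : ℝ) :
    ζ m = ∑' k : ℕ, (1 / ((2 * k).factorial : ℝ)) * (m / σ) ^ (2 * k + 1) * s (2 * k)
      * (s (2 * k + 2) / ((2 * (k : ℝ) + 1) * s (2 * k)) - σ) := by
  have hσ0 : σ ≠ 0 := ne_of_gt hσ
  have h2π : (0:ℝ) ≤ 2 * π := by linarith [Real.pi_pos]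
  set E : ℝ → ℝ := fun x => Real.exp (-(1 / σ) * Real.cos (2 * x)) with hE
  set F : ℕ → ℝ → ℝ := fun n x =>
    (m / σ) ^ n / n.factorial * ((Real.sin x - m) * (Real.sin x ^ n * E x)) with hF
  have hcontF : ∀ n, Continuous (F n) := by
    intro n; simp only [hF, hE]; fun_prop
  have hInt : ∀ n, Integrable (F n) (volume.restrict (Set.Ioc (0:ℝ) (2 * π))) := fun n =>
    (hcontF n).integrableOn_Ioc
  -- bound on integrals of norms
  have hbd : ∀ n, (∫ x in Set.Ioc (0:ℝ) (2 * π), ‖F n x‖)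
      ≤ ((1 + |m|) * Real.exp (1/σ) * (|m / σ| ^ n / n.factorial)) * (2 * π) := by
    intro n
    have hC : ∀ x ∈ Set.Ioc (0:ℝ) (2 * π),
        ‖(fun y => ‖F n y‖) x‖ ≤ (1 + |m|) * Real.exp (1/σ) * (|m / σ| ^ n / n.factorial) := by
      intro x _
      rw [norm_norm]
      have h1 : ‖F n x‖ = |m/σ|^n / n.factorial * (|Real.sin x - m| * (|Real.sin x|^n * E x)) := by
        simp only [hF, Real.norm_eq_abs, abs_mul, abs_div, abs_pow, abs_of_nonneg
          (show 0 ≤ E x from (Real.exp_pos _).le), Nat.abs_cast]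
      rw [h1]
      have hs1 : |Real.sin x| ^ n ≤ 1 :=
        pow_le_one₀ (abs_nonneg _) (Real.abs_sin_le_one x)
      have hs2 : |Real.sin x - m| ≤ 1 + |m| := by
        calc |Real.sin x - m| ≤ |Real.sin x| + |m| := abs_sub _ _
          _ ≤ 1 + |m| := by linarith [Real.abs_sin_le_one x]
      have hs3 : E x ≤ Real.exp (1/σ) := by
        apply Real.exp_le_exp.2
        have := Real.neg_one_le_cos (2 * x)
        have h1σ : 0 < 1/σ := by positivity
        nlinarith
      have hfac : (0:ℝ) < n.factorial := by positivity
      calc |m/σ|^n / n.factorial * (|Real.sin x - m| * (|Real.sin x|^n * E x))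
          ≤ |m/σ|^n / n.factorial * ((1 + |m|) * (1 * Real.exp (1/σ))) := by
            apply mul_le_mul_of_nonneg_left _ (by positivity)
            apply mul_le_mul hs2 _ (by positivity) (by positivity)
            apply mul_le_mul hs1 hs3 (Real.exp_pos _).le one_pos.le
        _ = (1 + |m|) * Real.exp (1/σ) * (|m / σ| ^ n / n.factorial) := by ring
    have hmeas : AEStronglyMeasurable (fun y => ‖F n y‖)
        ((volume : Measure ℝ).restrict (Set.Ioc (0:ℝ) (2 * π))) :=
      ((hcontF n).norm).aestronglyMeasurable
    have hfin : (volume : Measure ℝ) (Set.Ioc (0:ℝ) (2 * π)) < ⊤ := by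
      rw [Real.volume_Ioc]; exact ENNReal.ofReal_lt_top
    have := MeasureTheory.norm_setIntegral_le_of_norm_le_const hfin hC
    calc (∫ x in Set.Ioc (0:ℝ) (2 * π), ‖F n x‖)
        ≤ ‖∫ x in Set.Ioc (0:ℝ) (2 * π), ‖F n x‖‖ := le_abs_self _
      _ ≤ _ := by
          refine le_trans this ?_
          rw [measureReal_def, Real.volume_Ioc, ENNReal.toReal_ofReal (by linarith)]
          simp
  have hNormSum : Summable (fun n => ∫ x in Set.Ioc (0:ℝ) (2 * π), ‖F n x‖) := by
    apply Summable.of_nonneg_of_le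
      (fun n => integral_nonneg (fun x => norm_nonneg _)) hbd
    exact ((Real.summable_pow_div_factorial _).mul_left _).mul_right _
  have hSum := MeasureTheory.hasSum_integral_of_summable_integral_norm hInt hNormSum
  -- identify limit with ζ m
  have hptx : ∀ x : ℝ, (∑' n, F n x)
      = (Real.sin x - m) * Real.exp (-(1 / σ) * Real.cos (2 * x) + (m / σ) * Real.sin x) := by
    intro x
    have hexp : HasSum (fun n : ℕ => ((m / σ) * Real.sin x) ^ n / n.factorial)
        (Real.exp ((m / σ) * Real.sin x)) := by
      rw [Real.exp_eq_exp_ℝ]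
      exact NormedSpace.expSeries_div_hasSum_exp _
    have hsum2 : HasSum (fun n => F n x)
        ((Real.sin x - m) * E x * Real.exp ((m / σ) * Real.sin x)) := by
      have := hexp.mul_left ((Real.sin x - m) * E x)
      convert this using 2 with n
      · rfl
      simp only [hF, mul_pow]
      ring
    rw [hsum2.tsum_eq, Real.exp_add, hE]
    ring
  have hval : (∫ x in Set.Ioc (0:ℝ) (2 * π), ∑' n, F n x) = ζ m := by
    rw [hζ m, intervalIntegral.integral_of_le h2π]
    exact setIntegral_congr_fun measurableSet_Ioc (fun x _ => hptx x)
  -- identify each term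
  have hterm : ∀ n : ℕ, (∫ x in Set.Ioc (0:ℝ) (2 * π), F n x)
      = (m / σ) ^ n / n.factorial * (s (n + 1) - m * s n) := by
    intro n
    rw [← intervalIntegral.integral_of_le h2π]
    have : (∫ x in (0:ℝ)..(2 * π), F n x)
        = ∫ x in (0:ℝ)..(2 * π),
          (m / σ) ^ n / n.factorial *
            (Real.sin x ^ (n+1) * E x - m * (Real.sin x ^ n * E x)) := by
      apply intervalIntegral.integral_congr
      intro x _
      simp only [hF]
      ring
    rw [this, intervalIntegral.integral_const_mul]
    congr 1
    rw [intervalIntegral.integral_sub ((zeta_cont σ (n+1)).intervalIntegrable _ _)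
      (((zeta_cont σ n).intervalIntegrable _ _).const_mul m),
      intervalIntegral.integral_const_mul, hs, hs]
  have hA : HasSum (fun n => (m / σ) ^ n / n.factorial * (s (n + 1) - m * s n)) (ζ m) := by
    rw [← hval, ← funext hterm]
    exact hSum
  set A : ℕ → ℝ := fun n => (m / σ) ^ n / n.factorial * (s (n + 1) - m * s n) with hAdef
  have hAsum : Summable A := hA.summable
  have hinj2 : Function.Injective (fun k : ℕ => 2 * k) := by intro a b h; dsimp at h; omega
  have hinj2' : Function.Injective (fun k : ℕ => 2 * k + 1) := by intro a b h; dsimp at h; omega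
  have he : Summable (fun k => A (2 * k)) := hAsum.comp_injective hinj2
  have ho : Summable (fun k => A (2 * k + 1)) := hAsum.comp_injective hinj2'
  have hsplit := tsum_even_add_odd he ho
  have hodd : ∀ k : ℕ, s (2 * k + 1) = 0 := by
    intro k; rw [hs]; exact s_odd_zero σ k
  have hpos : ∀ k : ℕ, 0 < s (2 * k) := by
    intro k; rw [hs]; exact s_even_pos σ k
  have htermwise : ∀ k : ℕ, A (2 * k) + A (2 * k + 1)
      = (1 / ((2 * k).factorial : ℝ)) * (m / σ) ^ (2 * k + 1) * s (2 * k)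
        * (s (2 * k + 2) / ((2 * (k : ℝ) + 1) * s (2 * k)) - σ) := by
    intro k
    have hsne : s (2 * k) ≠ 0 := ne_of_gt (hpos k)
    have hfac : ((2 * k).factorial : ℝ) ≠ 0 := by positivity
    have h2k1 : (2 * (k:ℝ) + 1) ≠ 0 := by positivity
    simp only [hAdef, hodd k, sub_zero]
    have hfs : ((2 * k + 1).factorial : ℝ) = (2 * (k:ℝ) + 1) * (2 * k).factorial := by
      rw [Nat.factorial_succ]; push_cast; ring
    have hidx : 2 * k + 1 + 1 = 2 * k + 2 := by ring
    rw [hidx, hfs]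
    have hmσ : m = (m / σ) * σ := by field_simp
    field_simp
    linear_combination (-((m / σ) ^ (2 * k) * (2 * (k:ℝ) + 1) * s (2 * k))) * hmσ
  rw [← hA.tsum_eq, ← hsplit, ← Summable.tsum_add he ho]
  exact tsum_congr htermwise
end

section
/- For each σ > 0, the derivative at zero of ζ_σ satisfies ζ_σ'(0) = (1/σ)·(s₂ − σ·s₀), where s₀ = ∫_{0}^{2π} e^{−(1/σ)cos(2x)} dx and s₂ = ∫_{0}^{2π} sin²x · e^{−(1/σ)cos(2x)} dx. Consequently, for σ > 1 one has ζ_σ'(0) < 0. -/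
open Real MeasureTheory intervalIntegral

/-- ζ_σ'(0) = (1/σ)(s₂ − σ s₀); consequently ζ_σ'(0) < 0 for σ > 1. -/
theorem zeta_deriv_at_zero (σ : ℝ) (hσ : 0 < σ)
    (ζ : ℝ → ℝ)
    (hζ : ∀ m : ℝ, ζ m = ∫ x in (0:ℝ)..(2 * π),
      (Real.sin x - m) * Real.exp (-(1 / σ) * Real.cos (2 * x) + (m / σ) * Real.sin x))
    (s₀ s₂ : ℝ)
    (hs₀ : s₀ = ∫ x in (0:ℝ)..(2 * π), Real.exp (-(1 / σ) * Real.cos (2 * x)))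
    (hs₂ : s₂ = ∫ x in (0:ℝ)..(2 * π),
      (Real.sin x) ^ 2 * Real.exp (-(1 / σ) * Real.cos (2 * x))) :
    deriv ζ 0 = (1 / σ) * (s₂ - σ * s₀) ∧ (1 < σ → deriv ζ 0 < 0) := by
  set F : ℝ → ℝ → ℝ := fun m x =>
    (Real.sin x - m) * Real.exp (-(1 / σ) * Real.cos (2 * x) + (m / σ) * Real.sin x) with hF
  set F' : ℝ → ℝ → ℝ := fun m x =>
    ((Real.sin x - m) * (Real.sin x / σ) - 1) *
      Real.exp (-(1 / σ) * Real.cos (2 * x) + (m / σ) * Real.sin x) with hF'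
  have hζF : ζ = fun m => ∫ x in (0:ℝ)..(2 * π), F m x := funext fun m => hζ m
  have hcont : ∀ m : ℝ, Continuous (F m) := by
    intro m; fun_prop
  have hcont' : ∀ m : ℝ, Continuous (F' m) := by
    intro m; fun_prop
  have key : HasDerivAt ζ (∫ x in (0:ℝ)..(2 * π), F' 0 x) 0 := by
    rw [hζF]
    refine (intervalIntegral.hasDerivAt_integral_of_dominated_loc_of_deriv_le (s := Metric.ball (0:ℝ) 1)
      (Metric.ball_mem_nhds _ one_pos) (F := F) (F' := F') (bound := fun _ => (1 + 2 / σ) * Real.exp (2 / σ))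
      ?_ ?_ ?_ ?_ ?_ ?_).2
    · exact Filter.Eventually.of_forall fun m => ((hcont m).aestronglyMeasurable).restrict
    · exact (hcont 0).intervalIntegrable _ _
    · exact ((hcont' 0).aestronglyMeasurable).restrict
    · refine Filter.Eventually.of_forall fun x _ m hm => ?_
      have hm1 : |m| ≤ 1 := by
        have : |m| < 1 := by simpa [Real.dist_eq] using hm
        exact this.le
      have hsx := Real.abs_sin_le_one x
      have h1 : |Real.sin x - m| ≤ 2 := by
        have := abs_sub (Real.sin x) m
        linarith
      have h2 : |(Real.sin x - m) * (Real.sin x / σ) - 1| ≤ 1 + 2 / σ := by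
        have hp : |(Real.sin x - m) * (Real.sin x / σ)| ≤ 2 / σ := by
          rw [abs_mul, abs_div, abs_of_pos hσ]
          have : |Real.sin x| / σ ≤ 1 / σ := by gcongr
          calc |Real.sin x - m| * (|Real.sin x| / σ) ≤ 2 * (1 / σ) := by
                apply mul_le_mul h1 this (by positivity) (by norm_num)
            _ = 2 / σ := by ring
        have := abs_sub ((Real.sin x - m) * (Real.sin x / σ)) 1
        rw [abs_one] at this
        linarith
      have h3 : Real.exp (-(1 / σ) * Real.cos (2 * x) + (m / σ) * Real.sin x)
          ≤ Real.exp (2 / σ) := by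
        apply Real.exp_le_exp.2
        have h1σ : 0 < 1 / σ := by positivity
        have hc : -(1 / σ) * Real.cos (2 * x) ≤ 1 / σ := by
          nlinarith [Real.neg_one_le_cos (2 * x)]
        have hs : (m / σ) * Real.sin x ≤ 1 / σ := by
          have habs : |(m / σ) * Real.sin x| ≤ 1 / σ := by
            rw [abs_mul, abs_div, abs_of_pos hσ]
            have hmσ : |m| / σ ≤ 1 / σ := by gcongr
            calc |m| / σ * |Real.sin x| ≤ 1 / σ * 1 := by
                  apply mul_le_mul hmσ hsx (abs_nonneg _) (by positivity)
              _ = 1 / σ := by ring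
          linarith [le_abs_self ((m / σ) * Real.sin x)]
        have : 1 / σ + 1 / σ = 2 / σ := by ring
        linarith
      rw [hF']
      simp only [norm_mul, Real.norm_eq_abs, Real.abs_exp]
      exact mul_le_mul h2 h3 (Real.exp_pos _).le (by positivity)
    · exact intervalIntegrable_const
    · refine Filter.Eventually.of_forall fun x _ m _ => ?_
      have h1 : HasDerivAt (fun m : ℝ => Real.sin x - m) (-1) m := by
        simpa using (hasDerivAt_id m).const_sub (Real.sin x)
      have h2 : HasDerivAt (fun m : ℝ =>
          Real.exp (-(1 / σ) * Real.cos (2 * x) + (m / σ) * Real.sin x))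
          (Real.exp (-(1 / σ) * Real.cos (2 * x) + (m / σ) * Real.sin x) * (Real.sin x / σ)) m := by
        have hlin : HasDerivAt (fun m : ℝ =>
            -(1 / σ) * Real.cos (2 * x) + (m / σ) * Real.sin x) (Real.sin x / σ) m := by
          have : HasDerivAt (fun m : ℝ => (m / σ) * Real.sin x) (Real.sin x / σ) m := by
            have h := ((hasDerivAt_id m).div_const σ).mul_const (Real.sin x)
            simp only [id_eq] at h
            rw [show Real.sin x / σ = 1 / σ * Real.sin x by ring]
            exact h
          simpa using this.const_add (-(1 / σ) * Real.cos (2 * x))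
        exact (Real.hasDerivAt_exp _).comp m hlin
      have := h1.fun_mul h2
      refine this.congr_deriv ?_
      rw [hF']; ring
  have hderiv : deriv ζ 0 = ∫ x in (0:ℝ)..(2 * π), F' 0 x := key.deriv
  have hint0 : (∫ x in (0:ℝ)..(2 * π), F' 0 x) = (1 / σ) * s₂ - s₀ := by
    have : ∀ x : ℝ, F' 0 x = (1 / σ) * ((Real.sin x) ^ 2 *
        Real.exp (-(1 / σ) * Real.cos (2 * x))) -
        Real.exp (-(1 / σ) * Real.cos (2 * x)) := by
      intro x; rw [hF']; simp; ring
    rw [intervalIntegral.integral_congr fun x _ => this x]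
    rw [intervalIntegral.integral_sub, intervalIntegral.integral_const_mul, hs₀, hs₂]
    · exact (Continuous.intervalIntegrable (by fun_prop) _ _)
    · exact (Continuous.intervalIntegrable (by fun_prop) _ _)
  have hmain : deriv ζ 0 = (1 / σ) * (s₂ - σ * s₀) := by
    rw [hderiv, hint0]
    field_simp
  refine ⟨hmain, fun hσ1 => ?_⟩
  rw [hmain]
  have hs0pos : 0 < s₀ := by
    rw [hs₀]
    apply intervalIntegral.intervalIntegral_pos_of_pos_on (Continuous.intervalIntegrable (by fun_prop) _ _)
    · intro x _; exact Real.exp_pos _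
    · positivity
  have hle : s₂ ≤ s₀ := by
    rw [hs₀, hs₂]
    apply intervalIntegral.integral_mono_on (by positivity)
      (Continuous.intervalIntegrable (by fun_prop) _ _)
      (Continuous.intervalIntegrable (by fun_prop) _ _)
    intro x _
    have h1 : (Real.sin x) ^ 2 ≤ 1 := Real.sin_sq_le_one x
    nlinarith [Real.exp_pos (-(1 / σ) * Real.cos (2 * x))]
  have : s₂ - σ * s₀ < 0 := by nlinarith
  have h1σ : 0 < 1 / σ := by positivity
  nlinarith
end

section
/- For each σ ≥ 1/2, c₂ − σ·c₀ < 0, where c₀ := ∫_{0}^{2π} e^{−(1/σ)cos(2x)} dx and c₂ := ∫_{0}^{2π} cos²x · e^{−(1/σ)cos(2x)} dx. -/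
open Real MeasureTheory intervalIntegral

/-- For σ ≥ 1/2, c₂ − σ c₀ < 0 where c_k = ∫₀^{2π} (cos x)^k e^{−(1/σ)cos(2x)} dx. -/
theorem c2_minus_sigma_c0_neg (σ : ℝ) (hσ : 1 / 2 ≤ σ) :
    (∫ x in (0:ℝ)..(2 * π), (Real.cos x) ^ 2 * Real.exp (-(1 / σ) * Real.cos (2 * x)))
      - σ * ∫ x in (0:ℝ)..(2 * π), Real.exp (-(1 / σ) * Real.cos (2 * x)) < 0 := by
  have hσ0 : (0:ℝ) < σ := lt_of_lt_of_le (by norm_num) hσ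
  set a : ℝ := 1 / σ with ha
  have ha0 : 0 < a := by positivity
  set g : ℝ → ℝ := fun x => (Real.cos x ^ 2 - σ) * Real.exp (-a * Real.cos (2 * x)) with hg
  have hgcont : Continuous g := by fun_prop
  -- rewrite LHS as a single integral of g
  have hint1 : IntervalIntegrable (fun x => (Real.cos x) ^ 2 * Real.exp (-a * Real.cos (2 * x)))
      MeasureTheory.volume 0 (2 * π) := (by fun_prop : Continuous _).intervalIntegrable _ _
  have hint2 : IntervalIntegrable (fun x => σ * Real.exp (-a * Real.cos (2 * x)))
      MeasureTheory.volume 0 (2 * π) := (by fun_prop : Continuous _).intervalIntegrable _ _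
  have hJ : (∫ x in (0:ℝ)..(2 * π), (Real.cos x) ^ 2 * Real.exp (-a * Real.cos (2 * x)))
      - σ * ∫ x in (0:ℝ)..(2 * π), Real.exp (-a * Real.cos (2 * x))
      = ∫ x in (0:ℝ)..(2 * π), g x := by
    rw [← intervalIntegral.integral_const_mul, ← intervalIntegral.integral_sub hint1 hint2]
    apply intervalIntegral.integral_congr
    intro x _
    simp only [g]
    ring
  rw [hJ]
  -- periodicity
  have hper : Function.Periodic g (2 * π) := by
    intro x
    have h1 : Real.cos (x + 2 * π) = Real.cos x := Real.cos_add_two_pi x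
    have h2 : 2 * (x + 2 * π) = (2 * x + 2 * π) + 2 * π := by ring
    simp only [g, h1, h2, Real.cos_add_two_pi]
  -- shift identity
  have hshift : (∫ x in (0:ℝ)..(2 * π), g (x + π / 2)) = ∫ x in (0:ℝ)..(2 * π), g x := by
    rw [intervalIntegral.integral_comp_add_right g (π / 2)]
    have := hper.intervalIntegral_add_eq (π / 2) 0
    rw [zero_add] at this
    rw [show (0:ℝ) + π / 2 = π / 2 by ring, show 2 * π + π / 2 = π / 2 + 2 * π by ring, this]
  have hgshift : Continuous fun x => g (x + π / 2) := by fun_prop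
  have h2J : (2:ℝ) * ∫ x in (0:ℝ)..(2 * π), g x
      = ∫ x in (0:ℝ)..(2 * π), (g x + g (x + π / 2)) := by
    rw [intervalIntegral.integral_add (hgcont.intervalIntegrable _ _)
      (hgshift.intervalIntegrable _ _), hshift]
    ring
  -- key pointwise formula
  have key : ∀ x : ℝ, g x + g (x + π / 2)
      = (Real.cos (2 * x) / 2) * (Real.exp (-a * Real.cos (2 * x)) - Real.exp (a * Real.cos (2 * x)))
        + (1 / 2 - σ) * (Real.exp (-a * Real.cos (2 * x)) + Real.exp (a * Real.cos (2 * x))) := by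
    intro x
    have h1 : Real.cos (x + π / 2) = -Real.sin x := Real.cos_add_pi_div_two x
    have h2 : 2 * (x + π / 2) = 2 * x + π := by ring
    have h3 : Real.cos (2 * x + π) = -Real.cos (2 * x) := Real.cos_add_pi _
    have hc : Real.cos (2 * x) = 2 * Real.cos x ^ 2 - 1 := Real.cos_two_mul x
    have hs : Real.sin x ^ 2 = 1 - Real.cos x ^ 2 := Real.sin_sq x
    simp only [g, h1, h2, h3, neg_mul, neg_neg, neg_sq]
    rw [hc, hs]
    ring_nf
  -- pointwise nonpositivity
  have hnonpos : ∀ x : ℝ, g x + g (x + π / 2) ≤ 0 := by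
    intro x
    rw [key x]
    set t := Real.cos (2 * x)
    have hsum : (1 / 2 - σ) * (Real.exp (-a * t) + Real.exp (a * t)) ≤ 0 := by
      apply mul_nonpos_of_nonpos_of_nonneg
      · linarith
      · positivity
    have hprod : (t / 2) * (Real.exp (-a * t) - Real.exp (a * t)) ≤ 0 := by
      rcases le_total 0 t with ht | ht
      · apply mul_nonpos_of_nonneg_of_nonpos (by linarith)
        have : Real.exp (-a * t) ≤ Real.exp (a * t) := Real.exp_le_exp.2 (by nlinarith)
        linarith
      · apply mul_nonpos_of_nonpos_of_nonneg (by linarith)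
        have : Real.exp (a * t) ≤ Real.exp (-a * t) := Real.exp_le_exp.2 (by nlinarith)
        linarith
    linarith
  -- strict negativity on (0, π/4)
  have hneg : ∀ x ∈ Set.Ioo (0:ℝ) (π / 4), g x + g (x + π / 2) < 0 := by
    intro x hx
    rw [key x]
    have hπ := Real.pi_pos
    have ht : 0 < Real.cos (2 * x) := by
      apply Real.cos_pos_of_mem_Ioo
      constructor <;> [linarith [hx.1]; linarith [hx.2]]
    set t := Real.cos (2 * x)
    have hsum : (1 / 2 - σ) * (Real.exp (-a * t) + Real.exp (a * t)) ≤ 0 := by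
      apply mul_nonpos_of_nonpos_of_nonneg
      · linarith
      · positivity
    have hlt : Real.exp (-a * t) < Real.exp (a * t) := Real.exp_lt_exp.2 (by nlinarith)
    have hprod : (t / 2) * (Real.exp (-a * t) - Real.exp (a * t)) < 0 :=
      mul_neg_of_pos_of_neg (by linarith) (by linarith)
    linarith
  -- conclude
  have hcont2 : Continuous fun x => g x + g (x + π / 2) := by fun_prop
  have hπ := Real.pi_pos
  have hsplit : (∫ x in (0:ℝ)..(2 * π), (g x + g (x + π / 2)))
      = (∫ x in (0:ℝ)..(π / 4), (g x + g (x + π / 2)))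
        + ∫ x in (π / 4)..(2 * π), (g x + g (x + π / 2)) :=
    (intervalIntegral.integral_add_adjacent_intervals (hcont2.intervalIntegrable _ _)
      (hcont2.intervalIntegrable _ _)).symm
  have hI1 : (∫ x in (0:ℝ)..(π / 4), (g x + g (x + π / 2))) < 0 := by
    have := intervalIntegral.intervalIntegral_pos_of_pos_on
      (f := fun x => -(g x + g (x + π / 2))) (a := 0) (b := π / 4)
      ((by fun_prop : Continuous fun x => -(g x + g (x + π / 2))).intervalIntegrable _ _)
      (fun x hx => neg_pos.2 (hneg x hx)) (by linarith)
    rw [intervalIntegral.integral_neg] at this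
    linarith
  have hI2 : (∫ x in (π / 4)..(2 * π), (g x + g (x + π / 2))) ≤ 0 := by
    have := intervalIntegral.integral_nonneg (μ := MeasureTheory.volume) (f := fun x => -(g x + g (x + π / 2)))
      (a := π / 4) (b := 2 * π) (by linarith) (fun x _ => neg_nonneg.2 (hnonpos x))
    rw [intervalIntegral.integral_neg] at this
    linarith
  nlinarith [h2J, hsplit, hI1, hI2]
end
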